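/- Let H be a complex Hilbert space, A a continuous linear selfadjoint operator on H, ω₁, ω₂ ∈ H, α ∈ ℂ with α ≠ 0, and z ∈ ℂ such that A − z·I is invertible (with continuous inverse R_z). Assume α⁻¹ + (R_z ω₂, ω₁) ≠ 0. Then Ã − z·I is invertible, where Ã = A + α(·,ω₁)ω₂, and its inverse is given by the Krein-type formula (Ã − z)⁻¹ = R_z + b_z (·, n_{\bar z}) m_z, where m_z = R_z ω₂, n_{\bar z} = (A − \bar z)⁻¹ ω₁ (note that A − \bar z = (A − z)* is invertible since A is selfadjoint), and b_z = −(α⁻¹ + (R_z ω₂, ω₁))⁻¹; that is, for every f ∈ H, (Ã − z)⁻¹ f = R_z f + b_z (f, n_{\bar z}) m_z. -/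

import Mathlib

open ContinuousLinearMap

local notation "⟪" x ", " y "⟫" => @inner ℂ _ _ x y

/-- The nonsymmetric rank-one perturbation `Ã = A + α(·,ω₁)ω₂`. -/
noncomputable def rankOnePert {H : Type*} [NormedAddCommGroup H] [InnerProductSpace ℂ H]
    (A : H →L[ℂ] H) (α : ℂ) (ω₁ ω₂ : H) : H →L[ℂ] H :=
  A + α • (innerSL ℂ ω₁).smulRight ω₂

/-- Krein-type resolvent formula for the nonsymmetric rank-one perturbation:
if `A - z` is invertible with inverse `R`, `A - z̄` is invertible with inverse `S`
(automatic since `A` is selfadjoint), and `α⁻¹ + (R ω₂, ω₁) ≠ 0`, then `Ã - z` is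
invertible and `(Ã - z)⁻¹ f = R f + b_z (f, n_z̄) m_z` with `m_z = R ω₂`,
`n_z̄ = S ω₁`, `b_z = -(α⁻¹ + (R ω₂, ω₁))⁻¹`. -/
theorem krein_formula_rankOnePert {H : Type*} [NormedAddCommGroup H] [InnerProductSpace ℂ H]
    [CompleteSpace H] (A : H →L[ℂ] H) (hA : IsSelfAdjoint A) (ω₁ ω₂ : H) (α : ℂ) (hα : α ≠ 0)
    (z : ℂ) (R : H →L[ℂ] H)
    (hR1 : (A - z • 1) ∘L R = 1) (hR2 : R ∘L (A - z • 1) = 1)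
    (S : H →L[ℂ] H)
    (hS1 : (A - (starRingEnd ℂ) z • 1) ∘L S = 1) (hS2 : S ∘L (A - (starRingEnd ℂ) z • 1) = 1)
    (hb : α⁻¹ + ⟪ω₁, R ω₂⟫ ≠ 0) :
    ∃ T : H →L[ℂ] H,
      (rankOnePert A α ω₁ ω₂ - z • 1) ∘L T = 1 ∧
      T ∘L (rankOnePert A α ω₁ ω₂ - z • 1) = 1 ∧
      ∀ f : H, T f = R f + (-(α⁻¹ + ⟪ω₁, R ω₂⟫)⁻¹) • ⟪S ω₁, f⟫ • R ω₂ := by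

  set p : ℂ := ⟪ω₁, R ω₂⟫ with hpdef
  set b : ℂ := -(α⁻¹ + p)⁻¹ with hbdef
  have hRf : ∀ f, (A - z • 1) (R f) = f := fun f => DFunLike.congr_fun hR1 f
  have hfR : ∀ f, R ((A - z • 1) f) = f := fun f => DFunLike.congr_fun hR2 f
  have hSw : (A - (starRingEnd ℂ) z • 1) (S ω₁) = ω₁ := DFunLike.congr_fun hS1 ω₁
  have hadj : ContinuousLinearMap.adjoint (A - z • 1) = A - (starRingEnd ℂ) z • 1 := by
    rw [map_sub, hA.adjoint_eq, map_smulₛₗ]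
    rw [ContinuousLinearMap.one_def, ContinuousLinearMap.adjoint_id]
  have hkey : ∀ f, ⟪S ω₁, f⟫ = ⟪ω₁, R f⟫ := by
    intro f
    conv_lhs => rw [← hRf f]
    rw [← ContinuousLinearMap.adjoint_inner_left, hadj, hSw]
  have hz : b + α * (1 + b * p) = 0 := by
    have h1 : (α⁻¹ + p)⁻¹ * (α⁻¹ + p) = 1 := inv_mul_cancel₀ hb
    rw [hbdef]
    linear_combination (-α) * h1 + (α⁻¹ + p)⁻¹ * (mul_inv_cancel₀ hα)
  set T : H →L[ℂ] H := R + b • (innerSL ℂ (S ω₁)).smulRight (R ω₂) with hTdef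
  have hTf : ∀ f, T f = R f + (b * ⟪S ω₁, f⟫) • R ω₂ := by
    intro f
    simp [hTdef, smul_smul]
  have hApply : ∀ x, (rankOnePert A α ω₁ ω₂ - z • 1) x = (A - z • 1) x + (α * ⟪ω₁, x⟫) • ω₂ := by
    intro x
    simp only [rankOnePert, sub_apply, add_apply, smul_apply, smulRight_apply, innerSL_apply_apply,
      one_apply, smul_smul]
    abel
  refine ⟨T, ?_, ?_, ?_⟩
  · ext f
    have e1 : (A - z • 1) (T f) = f + (b * ⟪S ω₁, f⟫) • ω₂ := by
      rw [hTf, map_add, map_smul, hRf, hRf]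
    have e2 : ⟪ω₁, T f⟫ = ⟪S ω₁, f⟫ * (1 + b * p) := by
      rw [hTf, inner_add_right, inner_smul_right, ← hkey, hpdef]
      ring
    have hc : b * ⟪S ω₁, f⟫ + α * (⟪S ω₁, f⟫ * (1 + b * p)) = 0 := by
      linear_combination ⟪S ω₁, f⟫ * hz
    simp only [comp_apply, one_apply, hApply, e1, e2]
    rw [add_assoc, ← add_smul, hc, zero_smul, add_zero]
    rfl
  · ext f
    have e1 : T ((A - z • 1) f) = f + (b * ⟪ω₁, f⟫) • R ω₂ := by
      rw [hTf, hfR, hkey, hfR]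
    have e2 : T ω₂ = (1 + b * p) • R ω₂ := by
      rw [hTf, hkey, ← hpdef, add_smul, one_smul]
    have hc : b * ⟪ω₁, f⟫ + α * ⟪ω₁, f⟫ * (1 + b * p) = 0 := by
      linear_combination ⟪ω₁, f⟫ * hz
    simp only [comp_apply, one_apply, hApply, map_add, map_smul, e1, e2, smul_smul]
    rw [add_assoc, ← add_smul, hc, zero_smul, add_zero]
    rfl
  · intro f
    simp [hTf, hbdef, hpdef, smul_smul]
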